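/- arXiv:1012.3941 — 4 statements merged into one kernel-verified Lean document; each statement's English description precedes it below -/
import Mathlib

section
/- The function A(λ,t) = π λ² cosh(2t/λ) sinh(2/λ) + 2πλ, defined for λ > 0 and t ∈ ℝ, tends to infinity as |(log λ, t)| → ∞; that is, for every M > 0 there exists R > 0 such that A(λ,t) > M whenever (log λ)² + t² > R². -/
open Real

-- test auxiliary lemmas
lemma cosh_quad (y : ℝ) : 1 + y^2/2 ≤ Real.cosh y := by
  have h := Real.cosh_abs y
  have h0 : 0 ≤ |y| := abs_nonneg y
  have h1 : |y|/2 ≤ Real.sinh (|y|/2) := Real.self_le_sinh_iff.2 (by positivity)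
  have h2 : Real.cosh (2 * (|y|/2)) = Real.cosh (|y|/2)^2 + Real.sinh (|y|/2)^2 :=
    Real.cosh_two_mul _
  have h3 : 1 ≤ Real.cosh (|y|/2) := Real.one_le_cosh _
  have h4 : (|y|/2)^2 ≤ Real.sinh (|y|/2)^2 := by
    nlinarith
  have h5 : Real.cosh (2*(|y|/2)) = Real.cosh y := by
    rw [show 2*(|y|/2) = |y| by ring, h]
  have hsq : |y|^2 = y^2 := sq_abs y
  have h6 : Real.cosh (|y|/2)^2 = Real.sinh (|y|/2)^2 + 1 := Real.cosh_sq _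
  nlinarith

lemma exp_cube (x : ℝ) (hx : 0 ≤ x) : x^3/27 ≤ Real.exp x := by
  have h1 : x/3 ≤ Real.exp (x/3) := by linarith [Real.add_one_le_exp (x/3)]
  have h2 : (x/3)^3 ≤ (Real.exp (x/3))^3 := pow_le_pow_left₀ (by positivity) h1 3
  have h3 : (Real.exp (x/3))^3 = Real.exp x := by
    rw [pow_succ, pow_succ, pow_one, ← Real.exp_add, ← Real.exp_add]
    ring_nf
  nlinarith

lemma sinh_cube (x : ℝ) (hx : 0 ≤ x) : (x^3/27 - 1)/2 ≤ Real.sinh x := by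
  rw [Real.sinh_eq]
  have h1 := exp_cube x hx
  have h2 : Real.exp (-x) ≤ 1 := Real.exp_le_one_iff.2 (by linarith)
  linarith

set_option maxHeartbeats 1000000 in
theorem stmt_0 :
    ∀ M > (0:ℝ), ∃ R > (0:ℝ), ∀ lam t : ℝ, 0 < lam →
      (Real.log lam)^2 + t^2 > R^2 →
      π * lam^2 * Real.cosh (2*t/lam) * Real.sinh (2/lam) + 2*π*lam > M := by
  intro M hM
  refine ⟨6*(M+1), by positivity, ?_⟩
  intro lam t hl hgt
  set L := Real.log lam with hL
  have hπ := Real.pi_gt_three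
  have hπ0 := Real.pi_pos
  have hC0 : (0:ℝ) < Real.cosh (2*t/lam) := Real.cosh_pos _
  have hC1 : (1:ℝ) ≤ Real.cosh (2*t/lam) := Real.one_le_cosh _
  have hS0 : (0:ℝ) < Real.sinh (2/lam) := Real.sinh_pos_iff.2 (by positivity)
  have hPos : 0 < π * lam^2 * Real.cosh (2*t/lam) * Real.sinh (2/lam) := by positivity
  have hsplit : L^2 > (6*(M+1))^2/2 ∨ t^2 > (6*(M+1))^2/2 := by
    by_contra h
    push_neg at h
    obtain ⟨h1, h2⟩ := h
    nlinarith
  rcases hsplit with hcase | hcase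
  · -- |log lam| large
    rcases le_or_gt 0 L with hLpos | hLneg
    · -- lam large
      have hexp : L + 1 ≤ lam := by
        have := Real.add_one_le_exp L
        rwa [hL, Real.exp_log hl] at this
      have hLbig : 4*(M+1) < L := by nlinarith
      nlinarith
    · -- lam small
      have hLbig : 4*(M+1) < -L := by nlinarith
      have hexp : (1 - L) ≤ 1/lam := by
        have h1 := Real.add_one_le_exp (-L)
        rw [Real.exp_neg, hL, Real.exp_log hl] at h1
        rw [one_div]; linarith
      have hlam1 : lam < 1 := by
        have := Real.exp_log hl
        rw [← this, ← Real.exp_zero]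
        exact Real.exp_lt_exp.2 hLneg
      have hx : 2*(1 - L) ≤ 2/lam := by
        rw [div_eq_mul_one_div]
        nlinarith
      have hs3 : ((2/lam)^3/27 - 1)/2 ≤ Real.sinh (2/lam) := sinh_cube _ (by positivity)
      have hid : lam^2 * (2/lam)^3 = 4*(2/lam) := by field_simp; ring
      -- A > pi*lam^2*sinh ≥ pi*lam^2*((2/lam)^3/27-1)/2 = pi*(4*(2/lam)/27 - lam^2)/2
      have hstep : π * (4*(2/lam)/27 - lam^2)/2 ≤ π * lam^2 * Real.cosh (2*t/lam) * Real.sinh (2/lam) := by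
        have ha : π * lam^2 * (((2/lam)^3/27 - 1)/2) ≤ π * lam^2 * Real.sinh (2/lam) :=
          mul_le_mul_of_nonneg_left hs3 (by positivity)
        have hb : π * lam^2 * Real.sinh (2/lam) ≤ π * lam^2 * Real.cosh (2*t/lam) * Real.sinh (2/lam) := by
          nlinarith
        have hc : π * lam^2 * (((2/lam)^3/27 - 1)/2) = π * (lam^2*(2/lam)^3/27 - lam^2)/2 := by ring
        rw [hc, hid] at ha
        linarith
      have hxpos : (0:ℝ) < 2/lam := by positivity
      nlinarith
  · -- |t| large
    have ht0 : 0 ≤ |t| := abs_nonneg t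
    have htsq : |t|^2 = t^2 := sq_abs t
    have htbig : 4*(M+1) < |t| := by nlinarith
    have hCq : 1 + (2*t/lam)^2/2 ≤ Real.cosh (2*t/lam) := cosh_quad _
    have hSl : 2/lam ≤ Real.sinh (2/lam) := Real.self_le_sinh_iff.2 (by positivity)
    have h3 : (1 + (2*t/lam)^2/2) * (2/lam) ≤ Real.cosh (2*t/lam) * Real.sinh (2/lam) :=
      mul_le_mul hCq hSl (by positivity) (by linarith)
    have h4 : lam^2 * ((1 + (2*t/lam)^2/2) * (2/lam)) = 2*lam + 4*t^2/lam := by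
      field_simp; ring
    have h5 : 4*|t| ≤ 2*lam + 4*t^2/lam := by
      have heq : 2*lam + 4*t^2/lam = (2*lam^2+4*t^2)/lam := by field_simp
      rw [heq, le_div_iff₀ hl]
      nlinarith [sq_nonneg (lam - |t|), sq_abs t, sq_nonneg t]
    have key : 4*π*|t| ≤ π * lam^2 * Real.cosh (2*t/lam) * Real.sinh (2/lam) := by
      have h8 : π * (lam^2 * ((1 + (2*t/lam)^2/2) * (2/lam))) ≤ π * (lam^2 * (Real.cosh (2*t/lam) * Real.sinh (2/lam))) := by
        apply mul_le_mul_of_nonneg_left _ (le_of_lt hπ0)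
        exact mul_le_mul_of_nonneg_left h3 (by positivity)
      rw [h4] at h8
      nlinarith
    nlinarith
end

section
/- The equation 2λ/(1 - λ²) = sinh(2/λ) has exactly one solution λ in the set (0,1) ∪ (1,∞), and this solution lies in (0,1). -/
open Real

noncomputable def f3 : ℝ → ℝ := fun x => 2*x/(1-x^2) - Real.sinh (2/x)

lemma f3_mono : StrictMonoOn f3 (Set.Ioo (0:ℝ) 1) := by
  intro x hx y hy hxy
  obtain ⟨hx0, hx1⟩ := hx
  obtain ⟨hy0, hy1⟩ := hy
  have h1 : 2*x/(1-x^2) < 2*y/(1-y^2) := by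
    rw [div_lt_div_iff₀ (by nlinarith) (by nlinarith)]
    nlinarith [mul_pos (sub_pos.2 hxy) (mul_pos hx0 hy0)]
  have h2 : Real.sinh (2/y) < Real.sinh (2/x) :=
    Real.sinh_lt_sinh.2 (div_lt_div_of_pos_left (by norm_num) hx0 hxy)
  simp only [f3]
  linarith

lemma f3_cont : ContinuousOn f3 (Set.Icc (1/2 : ℝ) (8/9)) := by
  apply ContinuousOn.sub
  · apply ContinuousOn.div (by fun_prop) (by fun_prop)
    intro x hx
    have := hx.1; have := hx.2
    nlinarith
  · apply Real.continuous_sinh.comp_continuousOn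
    apply ContinuousOn.div continuousOn_const continuousOn_id
    intro x hx
    have := hx.1
    simp only [id]
    linarith

lemma f3_neg : f3 (1/2) < 0 := by
  have h : (4:ℝ) < Real.sinh 4 := Real.self_lt_sinh_iff.2 (by norm_num)
  simp only [f3]
  norm_num
  linarith

lemma f3_pos : 0 < f3 (8/9) := by
  have he1 := Real.exp_one_lt_d9
  have hp1 := Real.exp_pos (1:ℝ)
  have h2 : Real.exp 2 < 7.39 := by
    rw [show (2:ℝ) = 1 + 1 by norm_num, Real.exp_add]
    nlinarith
  have h4 : Real.exp (1/4 : ℝ) ≤ 4/3 := by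
    have h := Real.add_one_le_exp (-(1/4):ℝ)
    rw [Real.exp_neg, inv_eq_one_div] at h
    have hp := Real.exp_pos (1/4:ℝ)
    rw [le_div_iff₀ hp] at h
    nlinarith
  have h94 : Real.exp (9/4 : ℝ) < 10 := by
    rw [show (9/4:ℝ) = 2 + 1/4 by norm_num, Real.exp_add]
    have hp2 := Real.exp_pos (2:ℝ)
    nlinarith
  have hs : Real.sinh (9/4 : ℝ) < 5 := by
    rw [Real.sinh_eq]
    have := Real.exp_pos (-(9/4):ℝ)
    linarith
  simp only [f3]
  rw [show (2:ℝ)/(8/9) = 9/4 by norm_num]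
  norm_num
  linarith

theorem stmt_3 :
    ∃ lam₀ ∈ Set.Ioo (0:ℝ) 1,
      2*lam₀/(1-lam₀^2) = Real.sinh (2/lam₀) ∧
      ∀ lam ∈ Set.Ioo (0:ℝ) 1 ∪ Set.Ioi (1:ℝ),
        2*lam/(1-lam^2) = Real.sinh (2/lam) → lam = lam₀ := by
  have hsub : Set.Icc (1/2 : ℝ) (8/9) ⊆ Set.Ioo (0:ℝ) 1 := by
    intro x hx
    constructor <;> [linarith [hx.1]; linarith [hx.2]]
  have hiv := intermediate_value_Icc (by norm_num : (1/2:ℝ) ≤ 8/9) f3_cont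
  have h0 : (0:ℝ) ∈ Set.Icc (f3 (1/2)) (f3 (8/9)) := ⟨le_of_lt f3_neg, le_of_lt f3_pos⟩
  obtain ⟨c, hc, hfc⟩ := hiv h0
  have hcmem : c ∈ Set.Ioo (0:ℝ) 1 := hsub hc
  refine ⟨c, hcmem, ?_, ?_⟩
  · have : 2*c/(1-c^2) - Real.sinh (2/c) = 0 := hfc
    linarith
  · intro lam hlam heq
    rcases hlam with hlam | hlam
    · -- lam ∈ (0,1): use strict monotonicity
      have hflam : f3 lam = 0 := by simp only [f3]; linarith
      have hfc0 : f3 c = 0 := hfc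
      exact f3_mono.injOn hlam hcmem (by rw [hflam, hfc0])
    · -- lam > 1: contradiction
      exfalso
      have h1 : (1:ℝ) < lam := hlam
      have hlhs : 2*lam/(1-lam^2) < 0 :=
        div_neg_of_pos_of_neg (by linarith) (by nlinarith)
      have hrhs : 0 < Real.sinh (2/lam) := by
        apply Real.sinh_pos_iff.2
        positivity
      linarith
end

section
/- Let G be a holomorphic function on the annulus A = {z ∈ ℂ : r < |z| < R}, with 0 < r < ρ < R, and let a₀ = (1/(2π)) ∫_{|z|=ρ} G(z) |dz|/|z| be the average of G over the circle |z| = ρ. Then ρ² ∫_{|z|=ρ} Δ|G|² |dz|/|z| ≥ 4 ∫_{|z|=ρ} |G|² |dz|/|z| − 8π |a₀|², where Δ|G|² = 4|G′|². -/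
open Real Complex MeasureTheory AddCircle
open scoped ENNReal

private lemma two_pi_pos' : (0:ℝ) < 2 * Real.pi := Real.two_pi_pos

/-- Fourier coefficient of the periodic lift equals fourierCoeffOn. -/
private lemma coeff_lift_eq {f : ℝ → ℂ} (hper : Function.Periodic f (2 * Real.pi)) (n : ℤ) :
    @fourierCoeff (2 * Real.pi) ⟨two_pi_pos'⟩ ℂ _ _ hper.lift n
      = fourierCoeffOn two_pi_pos' f n := by
  haveI : Fact ((0:ℝ) < 2 * Real.pi) := ⟨two_pi_pos'⟩
  rw [fourierCoeff_eq_intervalIntegral _ n 0, fourierCoeffOn_eq_integral]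
  simp_rw [fourier_coe_apply, zero_add, sub_zero]
  congr 1

private lemma wirtinger {f g : ℝ → ℂ} (hf : Continuous f) (hg : Continuous g)
    (hderiv : ∀ x, HasDerivAt f (g x) x) (hper : Function.Periodic f (2 * Real.pi)) :
    (∫ θ in (0:ℝ)..(2 * Real.pi), ‖f θ‖^2)
      ≤ (∫ θ in (0:ℝ)..(2 * Real.pi), ‖g θ‖^2)
        + 2*Real.pi*‖(2*(Real.pi:ℂ))⁻¹ * ∫ θ in (0:ℝ)..(2 * Real.pi), f θ‖^2 := by
  haveI hT : Fact ((0:ℝ) < 2 * Real.pi) := ⟨two_pi_pos'⟩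
  -- g is periodic
  have hgd : ∀ x, deriv f x = g x := fun x => (hderiv x).deriv
  have hperg : Function.Periodic g (2 * Real.pi) := by
    intro x
    rw [← hgd, ← hgd, ← deriv_comp_add_const f (2 * Real.pi) x]
    congr 1
    exact funext fun y => hper y
  -- continuous lifts
  have hFcont : Continuous hper.lift := continuous_coinduced_dom.mpr hf
  have hGcont : Continuous hperg.lift := continuous_coinduced_dom.mpr hg
  set FL : Lp ℂ 2 (@haarAddCircle (2 * Real.pi) hT) :=
    ContinuousMap.toLp (E := ℂ) 2 haarAddCircle ℂ ⟨hper.lift, hFcont⟩ with hFL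
  set GLp : Lp ℂ 2 (@haarAddCircle (2 * Real.pi) hT) :=
    ContinuousMap.toLp (E := ℂ) 2 haarAddCircle ℂ ⟨hperg.lift, hGcont⟩ with hGLp
  -- coefficients
  set c : ℤ → ℂ := fourierCoeffOn two_pi_pos' f with hc
  set d : ℤ → ℂ := fourierCoeffOn two_pi_pos' g with hd
  have hcF : ∀ n, fourierCoeff FL n = c n := fun n => by
    rw [hFL, fourierCoeff_toLp]; exact coeff_lift_eq hper n
  have hdG : ∀ n, fourierCoeff GLp n = d n := fun n => by
    rw [hGLp, fourierCoeff_toLp]; exact coeff_lift_eq hperg n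
  -- key coefficient relation
  have key : ∀ n : ℤ, n ≠ 0 → (Complex.I * n) * c n = d n := by
    intro n hn
    have h := fourierCoeffOn_of_hasDerivAt two_pi_pos' hn
      (fun x _ => hderiv x) (hg.intervalIntegrable _ _)
    have hf20 : f (2 * Real.pi) = f 0 := by simpa using hper 0
    rw [hf20, sub_self, mul_zero, zero_sub] at h
    rw [← hc, ← hd] at h
    rw [h]
    have hπ : (Real.pi : ℂ) ≠ 0 := Complex.ofReal_ne_zero.mpr Real.pi_ne_zero
    have hnne : (n : ℂ) ≠ 0 := Int.cast_ne_zero.mpr hn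
    push_cast
    field_simp
    ring
  -- norms: ‖c n‖ ≤ ‖d n‖ for n ≠ 0
  have hnorm : ∀ n : ℤ, n ≠ 0 → ‖c n‖ ≤ ‖d n‖ := by
    intro n hn
    rw [← key n hn, norm_mul, norm_mul, Complex.norm_I, one_mul]
    have h1 : (1:ℝ) ≤ ‖(n:ℂ)‖ := by
      rw [Complex.norm_intCast]
      exact_mod_cast Int.one_le_abs (by exact_mod_cast hn)
    nlinarith [norm_nonneg (c n)]
  -- summability
  have hsum : ∀ x : Lp ℂ 2 (@haarAddCircle (2 * Real.pi) hT),
      Summable (fun n : ℤ => ‖fourierCoeff x n‖^2) := by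
    intro x
    have h := (lp.memℓp (fourierBasis.repr x)).summable
      (by norm_num : 0 < (2:ℝ≥0∞).toReal)
    simp_rw [fourierBasis_repr] at h
    refine h.congr fun n => ?_
    norm_num
  have hsumF : Summable (fun n : ℤ => ‖c n‖^2) :=
    (hsum FL).congr fun n => by rw [hcF]
  have hsumG : Summable (fun n : ℤ => ‖d n‖^2) :=
    (hsum GLp).congr fun n => by rw [hdG]
  -- Parseval for a continuous periodic function
  have parseval : ∀ (h : ℝ → ℂ) (hhp : Function.Periodic h (2 * Real.pi))
      (hcont : Continuous hhp.lift),
      (∫ θ in (0:ℝ)..(2 * Real.pi), ‖h θ‖^2)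
        = (2*Real.pi) * ∑' n : ℤ,
            ‖fourierCoeff (ContinuousMap.toLp (E := ℂ) 2 haarAddCircle ℂ ⟨hhp.lift, hcont⟩) n‖^2 := by
    intro h hhp hcont
    rw [tsum_sq_fourierCoeff]
    have e1 : (∫ t : AddCircle (2 * Real.pi),
        ‖(ContinuousMap.toLp (E := ℂ) 2 haarAddCircle ℂ ⟨hhp.lift, hcont⟩ :
            Lp ℂ 2 (@haarAddCircle (2 * Real.pi) hT)) t‖^2 ∂haarAddCircle)
        = ∫ t : AddCircle (2 * Real.pi), ‖hhp.lift t‖^2 ∂haarAddCircle := by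
      refine integral_congr_ae ?_
      filter_upwards [ContinuousMap.coeFn_toLp (E := ℂ) (𝕜 := ℂ) (p := 2) haarAddCircle ⟨hhp.lift, hcont⟩]
        with t ht
      rw [ht]; rfl
    rw [e1]
    have e2 : (∫ t : AddCircle (2 * Real.pi), ‖hhp.lift t‖^2)
        = ∫ θ in (0:ℝ)..(2 * Real.pi), ‖h θ‖^2 := by
      rw [← AddCircle.intervalIntegral_preimage (2 * Real.pi) 0
        (fun t => ‖hhp.lift t‖^2), zero_add]
      exact intervalIntegral.integral_congr fun x _ => by rw [Function.Periodic.lift_coe]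
    have e3 : (∫ t : AddCircle (2 * Real.pi), ‖hhp.lift t‖^2)
        = (2 * Real.pi) * ∫ t : AddCircle (2 * Real.pi), ‖hhp.lift t‖^2 ∂haarAddCircle := by
      rw [volume_eq_smul_haarAddCircle, integral_smul_measure,
        ENNReal.toReal_ofReal two_pi_pos'.le, smul_eq_mul]
    rw [← e2, e3]
  have hPf : (∫ θ in (0:ℝ)..(2 * Real.pi), ‖f θ‖^2) = (2*Real.pi) * ∑' n : ℤ, ‖c n‖^2 := by
    rw [parseval f hper hFcont]
    congr 1
    exact tsum_congr fun n => by rw [← hFL, hcF]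
  have hPg : (∫ θ in (0:ℝ)..(2 * Real.pi), ‖g θ‖^2) = (2*Real.pi) * ∑' n : ℤ, ‖d n‖^2 := by
    rw [parseval g hperg hGcont]
    congr 1
    exact tsum_congr fun n => by rw [← hGLp, hdG]
  -- value of c 0
  have hc0 : ‖c 0‖ = ‖(2*(Real.pi:ℂ))⁻¹ * ∫ θ in (0:ℝ)..(2 * Real.pi), f θ‖ := by
    rw [hc, fourierCoeffOn_eq_integral]
    simp only [neg_zero, fourier_zero, one_smul, sub_zero]
    rw [norm_smul, norm_mul, norm_inv]
    congr 1
    have : (2*(Real.pi:ℂ)) = ((2*Real.pi : ℝ) : ℂ) := by push_cast; ring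
    rw [this, Complex.norm_real]
    rw [Real.norm_eq_abs, Real.norm_eq_abs, abs_of_pos (by positivity),
      abs_of_pos two_pi_pos', one_div]
  -- tsum inequality
  have hmain : ∑' n : ℤ, ‖c n‖^2 ≤ (∑' n : ℤ, ‖d n‖^2) + ‖c 0‖^2 := by
    have hite : Summable (fun n : ℤ => if n = 0 then ‖c 0‖^2 else 0) :=
      (hasSum_ite_eq (0:ℤ) (‖c 0‖^2)).summable
    have h1 : ∑' n : ℤ, ‖c n‖^2
        ≤ ∑' n : ℤ, (‖d n‖^2 + if n = 0 then ‖c 0‖^2 else 0) := by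
      refine Summable.tsum_le_tsum (fun n => ?_) hsumF (hsumG.add hite)
      by_cases hn : n = 0
      · subst hn
        rw [if_pos rfl]
        nlinarith [norm_nonneg (d (0:ℤ)), sq_nonneg ‖d (0:ℤ)‖]
      · simp only [hn, if_false, add_zero]
        have := hnorm n hn
        nlinarith [norm_nonneg (c n)]
    rwa [Summable.tsum_add hsumG hite, (hasSum_ite_eq (0:ℤ) (‖c 0‖^2)).tsum_eq] at h1
  rw [hPf, hPg, ← hc0]
  nlinarith [Real.pi_pos]

theorem stmt_7 (r R ρ : ℝ) (hr : 0 < r) (h1 : r < ρ) (h2 : ρ < R)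
    (G : ℂ → ℂ)
    (hG : DifferentiableOn ℂ G {z : ℂ | r < ‖z‖ ∧ ‖z‖ < R}) :
    4 * (∫ θ in (0:ℝ)..(2*Real.pi), ‖G (ρ * Complex.exp (θ * Complex.I))‖^2)
      - 8*Real.pi*‖(2*(Real.pi:ℂ))⁻¹ *
          ∫ θ in (0:ℝ)..(2*Real.pi), G (ρ * Complex.exp (θ * Complex.I))‖^2
    ≤ ρ^2 * ∫ θ in (0:ℝ)..(2*Real.pi),
        4 * ‖deriv G (ρ * Complex.exp (θ * Complex.I))‖^2 := by
  have hρ : 0 < ρ := lt_trans hr h1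
  set S : Set ℂ := {z : ℂ | r < ‖z‖ ∧ ‖z‖ < R} with hS
  have hopen : IsOpen S := isOpen_Ioo.preimage continuous_norm
  have hmem : ∀ θ : ℝ, (ρ:ℂ) * Complex.exp (θ * Complex.I) ∈ S := by
    intro θ
    have : ‖(ρ:ℂ) * Complex.exp (θ * Complex.I)‖ = ρ := by
      rw [norm_mul, Complex.norm_exp_ofReal_mul_I, mul_one, Complex.norm_real, Real.norm_eq_abs,
        abs_of_pos hρ]
    constructor <;> simp only [Set.mem_setOf_eq, this] <;> assumption
  -- the curve and its derivative
  have hz : ∀ θ : ℝ, HasDerivAt (fun t : ℝ => (ρ:ℂ) * Complex.exp (t * Complex.I))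
      ((ρ:ℂ) * Complex.exp (θ * Complex.I) * Complex.I) θ := by
    intro θ
    have h1 : HasDerivAt (fun w : ℂ => (ρ:ℂ) * Complex.exp (w * Complex.I))
        ((ρ:ℂ) * Complex.exp ((θ:ℂ) * Complex.I) * Complex.I) (θ:ℂ) := by
      have h2 := ((Complex.hasDerivAt_exp ((θ:ℂ) * Complex.I)).comp (θ:ℂ)
        ((hasDerivAt_id (θ:ℂ)).mul_const Complex.I)).const_mul (ρ:ℂ)
      exact h2.congr_deriv (by ring)
    exact h1.comp_ofReal
  set f : ℝ → ℂ := fun θ => G ((ρ:ℂ) * Complex.exp (θ * Complex.I)) with hf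
  set g : ℝ → ℂ := fun θ => deriv G ((ρ:ℂ) * Complex.exp (θ * Complex.I))
      * ((ρ:ℂ) * Complex.exp (θ * Complex.I) * Complex.I) with hg
  have hderiv : ∀ θ : ℝ, HasDerivAt f (g θ) θ := by
    intro θ
    exact ((hG.differentiableAt (hopen.mem_nhds (hmem θ))).hasDerivAt).comp θ (hz θ)
  -- continuity
  have hzc : Continuous fun θ : ℝ => (ρ:ℂ) * Complex.exp (θ * Complex.I) := by
    fun_prop
  have hfc : Continuous f := hG.continuousOn.comp_continuous hzc hmem
  have hderivGc : ContinuousOn (deriv G) S :=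
    ((hG.analyticOnNhd hopen).deriv).continuousOn
  have hgc : Continuous g :=
    (hderivGc.comp_continuous hzc hmem).mul (hzc.mul continuous_const)
  -- periodicity
  have hper : Function.Periodic f (2 * Real.pi) := by
    intro θ
    simp only [hf]
    have : ((θ + 2*Real.pi : ℝ) : ℂ) * Complex.I
        = (θ:ℂ) * Complex.I + 2*(Real.pi:ℂ)*Complex.I := by push_cast; ring
    rw [this, Complex.exp_add, Complex.exp_two_pi_mul_I, mul_one]
  have W := wirtinger hfc hgc hderiv hper
  -- compute right side
  have hgnorm : ∀ θ : ℝ, ‖g θ‖^2 = ρ^2 * ‖deriv G ((ρ:ℂ) * Complex.exp (θ * Complex.I))‖^2 := by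
    intro θ
    rw [hg]
    simp only [norm_mul]
    rw [Complex.norm_I, Complex.norm_real, Real.norm_eq_abs, abs_of_pos hρ]
    have : ‖Complex.exp ((θ:ℂ) * Complex.I)‖ = 1 := Complex.norm_exp_ofReal_mul_I θ
    rw [this]
    ring
  have hRHS : ρ^2 * (∫ θ in (0:ℝ)..(2*Real.pi),
      4 * ‖deriv G ((ρ:ℂ) * Complex.exp (θ * Complex.I))‖^2)
      = 4 * ∫ θ in (0:ℝ)..(2*Real.pi), ‖g θ‖^2 := by
    rw [intervalIntegral.integral_const_mul]
    rw [show (∫ θ in (0:ℝ)..(2*Real.pi), ‖g θ‖^2)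
        = ∫ θ in (0:ℝ)..(2*Real.pi), ρ^2 * ‖deriv G ((ρ:ℂ) * Complex.exp (θ * Complex.I))‖^2
      from intervalIntegral.integral_congr fun x _ => hgnorm x]
    rw [intervalIntegral.integral_const_mul]
    ring
  rw [hRHS]
  linarith
end

section
/- Let G be holomorphic on an annulus containing the circle |z| = ρ, with Laurent expansion G(z) = Σ_{n∈ℤ} aₙ zⁿ. If the Laurent coefficients of F = G² satisfy that the constant (n = 0) coefficient of F vanishes, i.e. a₀² + 2 Σ_{n≥1} aₙ a₋ₙ = 0, then 4π |a₀|² ≤ ∫_{|z|=ρ} |G(z)|² |dz|/|z| = 2π Σ_{n∈ℤ} |aₙ|² ρ^{2n}. -/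
open Real Complex MeasureTheory intervalIntegral

private lemma orth8 (n : ℤ) :
    (∫ θ in (0:ℝ)..(2*Real.pi), Complex.exp (n * θ * I)) =
      if n = 0 then (2*Real.pi : ℂ) else 0 := by
  rcases eq_or_ne n 0 with h | h
  · simp [h, Complex.ofReal_mul]
  · rw [if_neg h]
    have hc : (n : ℂ) * I ≠ 0 := by
      simp [Complex.I_ne_zero, Int.cast_injective.ne_iff, h]
    have := integral_exp_mul_complex (a := 0) (b := 2*Real.pi) hc
    simp_rw [show ∀ θ:ℝ, (n:ℂ) * θ * I = (n * I) * θ from fun θ => by ring]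
    rw [this]
    have h1 : (n:ℂ) * I * ((2*Real.pi : ℝ) : ℂ) = n * (2 * Real.pi * I) := by push_cast; ring
    rw [h1, Complex.exp_int_mul_two_pi_mul_I]
    simp

set_option maxHeartbeats 1000000 in
theorem stmt_8 (r R ρ : ℝ) (hr : 0 < r) (h1 : r < ρ) (h2 : ρ < R)
    (G : ℂ → ℂ) (a : ℤ → ℂ)
    (hG : DifferentiableOn ℂ G {z : ℂ | r < ‖z‖ ∧ ‖z‖ < R})
    (hLaurent : ∀ z : ℂ, r < ‖z‖ → ‖z‖ < R →
      HasSum (fun n : ℤ => a n * z ^ n) (G z))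
    (hcoef : (a 0)^2 + 2 * ∑' n : ℕ, a ((n:ℤ)+1) * a (-((n:ℤ)+1)) = 0) :
    (∫ θ in (0:ℝ)..(2*Real.pi), ‖G (ρ * Complex.exp (θ * Complex.I))‖^2)
        = 2*Real.pi * ∑' n : ℤ, ‖a n‖^2 * ρ^(2*n) ∧
    4*Real.pi*‖a 0‖^2 ≤
      ∫ θ in (0:ℝ)..(2*Real.pi), ‖G (ρ * Complex.exp (θ * Complex.I))‖^2 := by
  have hρ0 : (0:ℝ) < ρ := hr.trans h1
  have hρC : (ρ : ℂ) ≠ 0 := by exact_mod_cast hρ0.ne'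
  obtain ⟨c, hc_def⟩ : ∃ c : ℤ → ℂ, c = fun n => a n * (ρ:ℂ)^n := ⟨_, rfl⟩
  obtain ⟨f, hf_def⟩ : ∃ f : ℝ → ℂ, f = fun θ : ℝ => G ((ρ:ℂ) * Complex.exp ((θ:ℂ) * I)) :=
    ⟨_, rfl⟩
  have hfeq : ∀ θ:ℝ, G ((ρ:ℂ) * Complex.exp ((θ:ℂ) * I)) = f θ := fun θ => by rw [hf_def]
  simp only [hfeq]
  have habs : ∀ θ:ℝ, ‖(ρ:ℂ) * Complex.exp (θ * I)‖ = ρ := by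
    intro θ
    rw [norm_mul, Complex.norm_exp_ofReal_mul_I, Complex.norm_real, Real.norm_of_nonneg hρ0.le, mul_one]
  have habs1 : ∀ (n:ℤ) (θ:ℝ), ‖Complex.exp (n * θ * I)‖ = 1 := by
    intro n θ
    rw [show (n:ℂ) * θ * I = ((n*θ:ℝ):ℂ) * I by push_cast; ring, Complex.norm_exp_ofReal_mul_I]
  -- pointwise Laurent expansion on the circle
  have hfθ : ∀ θ:ℝ, HasSum (fun n : ℤ => c n * Complex.exp (n * θ * I)) (f θ) := by
    intro θ
    rw [← hfeq]
    have h := hLaurent ((ρ:ℂ) * Complex.exp (θ * I)) (by rw [habs]; exact h1)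
      (by rw [habs]; exact h2)
    convert h using 2 with n
    rw [hc_def]
    rw [mul_zpow, mul_assoc, ← Complex.exp_int_mul]
    ring_nf
  have hcs : Summable c := by
    have := (hfθ 0).summable
    simpa using this
  have hcn : Summable (fun n => ‖c n‖) := summable_norm_iff.mpr hcs
  set M : ℝ := ∑' n : ℤ, ‖c n‖ with hM_def
  have hfbound : ∀ θ, ‖f θ‖ ≤ M := by
    intro θ
    rw [← (hfθ θ).tsum_eq]
    refine (norm_tsum_le_tsum_norm ?_).trans ?_
    · simpa [habs1] using hcn
    · refine le_of_eq (tsum_congr fun n => ?_)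
      simp [habs1]
  have hM0 : 0 ≤ M := tsum_nonneg fun n => norm_nonneg _
  have hfc : Continuous f := by
    rw [hf_def]
    apply hG.continuousOn.comp_continuous
    · exact (continuous_const.mul ((Complex.continuous_ofReal.mul continuous_const).cexp))
    · intro θ; exact ⟨by rw [habs]; exact h1, by rw [habs]; exact h2⟩
  have h2π : (0:ℝ) ≤ 2*Real.pi := by positivity
  -- conjugate expansion
  have hconj : ∀ θ:ℝ, HasSum (fun m : ℤ => (starRingEnd ℂ) (c m) * Complex.exp (-m * θ * I))
      ((starRingEnd ℂ) (f θ)) := by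
    intro θ
    have := Complex.hasSum_conj'.mpr (hfθ θ)
    convert this using 2 with m
    rw [map_mul (starRingEnd ℂ) (c m) (Complex.exp ((m:ℂ) * θ * I))]
    congr 1
    rw [← Complex.exp_conj]
    congr 1
    simp only [map_mul, Complex.conj_I, Complex.conj_ofReal, map_intCast]
    ring
  -- step B : for each n, ∫ exp(nθI) * conj (f θ) = 2π * conj (c n)
  have stepB : ∀ n : ℤ, (∫ θ in (0:ℝ)..(2*Real.pi), Complex.exp (n * θ * I) * (starRingEnd ℂ) (f θ))
      = (2*Real.pi : ℝ) * (starRingEnd ℂ) (c n) := by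
    intro n
    set F : ℤ → ℝ → ℂ := fun m θ => (starRingEnd ℂ) (c m) * Complex.exp ((n - m) * θ * I) with hF_def
    have hFpt : ∀ θ:ℝ, HasSum (fun m => F m θ) (Complex.exp (n * θ * I) * (starRingEnd ℂ) (f θ)) := by
      intro θ
      have := (hconj θ).mul_left (Complex.exp (n * θ * I))
      convert this using 2 with m
      · rfl
      rw [hF_def]
      simp only
      rw [show ((n:ℂ)-(m:ℂ))*θ*I = (n:ℂ)*θ*I + (-(m:ℂ)*θ*I) by ring, Complex.exp_add]
      ring
    have hFcont : ∀ m, Continuous (F m) := by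
      intro m
      exact continuous_const.mul (Complex.continuous_exp.comp (by fun_prop))
    have hF_int : ∀ m, IntegrableOn (F m) (Set.Ioc (0:ℝ) (2*Real.pi)) := fun m =>
      (hFcont m).integrableOn_Ioc
    have hF_norm : ∀ m θ, ‖F m θ‖ = ‖c m‖ := by
      intro m θ
      rw [hF_def]
      simp only [norm_mul]
      rw [show ((n:ℂ)-(m:ℂ)) = ((n-m : ℤ):ℂ) by push_cast; ring, habs1, mul_one,
        Complex.norm_conj]
    have hF_sum : Summable fun m => ∫ θ in Set.Ioc (0:ℝ) (2*Real.pi), ‖F m θ‖ := by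
      have : (fun m => ∫ θ in Set.Ioc (0:ℝ) (2*Real.pi), ‖F m θ‖)
          = fun m => (2*Real.pi) * ‖c m‖ := by
        funext m
        simp only [hF_norm]
        rw [MeasureTheory.setIntegral_const, measureReal_def, Real.volume_Ioc, smul_eq_mul]
        congr 1
        rw [ENNReal.toReal_ofReal (by linarith)]
        ring
      rw [this]
      exact hcn.mul_left _
    have swap := MeasureTheory.integral_tsum_of_summable_integral_norm hF_int hF_sum
    rw [intervalIntegral.integral_of_le h2π]
    have : ∀ θ ∈ Set.Ioc (0:ℝ) (2*Real.pi), Complex.exp (n * θ * I) * (starRingEnd ℂ) (f θ)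
        = ∑' m, F m θ := fun θ _ => (hFpt θ).tsum_eq.symm
    rw [MeasureTheory.setIntegral_congr_fun measurableSet_Ioc this, ← swap]
    have hterm : ∀ m : ℤ, (∫ θ in Set.Ioc (0:ℝ) (2*Real.pi), F m θ)
        = (starRingEnd ℂ) (c m) * (if (n - m : ℤ) = 0 then (2*Real.pi:ℂ) else 0) := by
      intro m
      rw [hF_def]
      simp only
      rw [MeasureTheory.integral_const_mul, ← intervalIntegral.integral_of_le h2π]
      simp_rw [show ∀ θ:ℝ, ((n:ℂ)-(m:ℂ))*θ*I = ((n-m : ℤ):ℂ)*θ*I from fun θ => by push_cast; ring]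
      rw [orth8]
    rw [tsum_congr hterm, tsum_eq_single n (fun m hm => by
      rw [if_neg (by omega), mul_zero])]
    rw [if_pos (by omega), mul_comm]
    norm_cast
  -- ‖c n‖² in terms of a and ρ
  have S_def : ∀ n:ℤ, ‖c n‖^2 = ‖a n‖^2 * ρ^(2*n) := by
    intro n
    rw [hc_def]
    simp only [norm_mul, mul_pow]
    congr 1
    rw [norm_zpow, Complex.norm_real, Real.norm_of_nonneg hρ0.le,
      show (2*n : ℤ) = n + n by ring, zpow_add₀ hρ0.ne', sq]
  have hMle : ∀ n, ‖c n‖ ≤ M := fun n => Summable.le_tsum hcn n (fun _ _ => norm_nonneg _)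
  have hs2 : Summable (fun n : ℤ => ‖c n‖^2) := by
    refine Summable.of_nonneg_of_le (fun n => by positivity) (fun n => ?_) (hcn.mul_right M)
    rw [sq]
    exact mul_le_mul_of_nonneg_left (hMle n) (norm_nonneg _)
  -- Parseval
  have key : (∫ θ in (0:ℝ)..(2*Real.pi), ‖f θ‖^2)
      = 2*Real.pi * ∑' n:ℤ, ‖c n‖^2 := by
    set F' : ℤ → ℝ → ℂ := fun n θ => c n * (Complex.exp (n*θ*I) * (starRingEnd ℂ) (f θ))
      with hF'_def
    have hF'pt : ∀ θ:ℝ, HasSum (fun n => F' n θ) (f θ * (starRingEnd ℂ) (f θ)) := by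
      intro θ
      have := (hfθ θ).mul_right ((starRingEnd ℂ) (f θ))
      convert this using 2 with n
      · rfl
      rw [hF'_def]
      simp only
      ring
    have hF'cont : ∀ n, Continuous (F' n) := by
      intro n
      exact continuous_const.mul ((Complex.continuous_exp.comp (by fun_prop)).mul
        (Complex.continuous_conj.comp hfc))
    have hF'_int : ∀ n, IntegrableOn (F' n) (Set.Ioc (0:ℝ) (2*Real.pi)) := fun n =>
      (hF'cont n).integrableOn_Ioc
    have hF'_sum : Summable fun n => ∫ θ in Set.Ioc (0:ℝ) (2*Real.pi), ‖F' n θ‖ := by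
      refine Summable.of_nonneg_of_le
        (fun n => MeasureTheory.integral_nonneg (fun θ => norm_nonneg _))
        (fun n => ?_) ((hcn.mul_right M).mul_left (2*Real.pi))
      have hle : ∀ θ, ‖F' n θ‖ ≤ ‖c n‖ * M := by
        intro θ
        rw [hF'_def]
        simp only [norm_mul, habs1, one_mul, Complex.norm_conj]
        exact mul_le_mul_of_nonneg_left (hfbound θ) (norm_nonneg _)
      calc (∫ θ in Set.Ioc (0:ℝ) (2*Real.pi), ‖F' n θ‖)
          ≤ ∫ _ in Set.Ioc (0:ℝ) (2*Real.pi), ‖c n‖ * M :=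
            MeasureTheory.integral_mono ((hF'cont n).norm.integrableOn_Ioc)
              (MeasureTheory.integrableOn_const (by
                rw [Real.volume_Ioc]; exact ENNReal.ofReal_ne_top)) hle
        _ = 2*Real.pi * (‖c n‖ * M) := by
            rw [MeasureTheory.setIntegral_const, measureReal_def, Real.volume_Ioc, smul_eq_mul,
              ENNReal.toReal_ofReal (by linarith)]
            ring
    have swap := MeasureTheory.integral_tsum_of_summable_integral_norm hF'_int hF'_sum
    have castL : ((∫ θ in (0:ℝ)..(2*Real.pi), ‖f θ‖^2 : ℝ) : ℂ)
        = ∫ θ in (0:ℝ)..(2*Real.pi), f θ * (starRingEnd ℂ) (f θ) := by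
      rw [show (∫ θ in (0:ℝ)..(2*Real.pi), f θ * (starRingEnd ℂ) (f θ))
          = ∫ θ in (0:ℝ)..(2*Real.pi), ((‖f θ‖^2 : ℝ) : ℂ) from
        intervalIntegral.integral_congr (fun θ _ => by
          rw [Complex.mul_conj, Complex.normSq_eq_norm_sq])]
      exact (RCLike.intervalIntegral_ofReal (𝕜 := ℂ) (f := fun θ => ‖f θ‖^2)).symm
    have main : (∫ θ in (0:ℝ)..(2*Real.pi), f θ * (starRingEnd ℂ) (f θ))
        = ((2*Real.pi : ℝ) : ℂ) * ∑' n:ℤ, ((‖c n‖^2 : ℝ) : ℂ) := by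
      rw [intervalIntegral.integral_of_le h2π,
        MeasureTheory.setIntegral_congr_fun measurableSet_Ioc
          (fun θ _ => ((hF'pt θ).tsum_eq).symm : ∀ θ ∈ Set.Ioc (0:ℝ) (2*Real.pi),
            f θ * (starRingEnd ℂ) (f θ) = ∑' n, F' n θ), ← swap]
      have hterm : ∀ n:ℤ, (∫ θ in Set.Ioc (0:ℝ) (2*Real.pi), F' n θ)
          = ((2*Real.pi : ℝ) : ℂ) * ((‖c n‖^2 : ℝ) : ℂ) := by
        intro n
        rw [hF'_def]
        simp only
        rw [MeasureTheory.integral_const_mul, ← intervalIntegral.integral_of_le h2π, stepB n]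
        rw [show c n * ((2*Real.pi:ℝ) * (starRingEnd ℂ) (c n))
          = ((2*Real.pi:ℝ):ℂ) * (c n * (starRingEnd ℂ) (c n)) by push_cast; ring,
          Complex.mul_conj, Complex.normSq_eq_norm_sq]
      rw [tsum_congr hterm, tsum_mul_left]
    have : ((∫ θ in (0:ℝ)..(2*Real.pi), ‖f θ‖^2 : ℝ) : ℂ)
        = ((2*Real.pi * ∑' n:ℤ, ‖c n‖^2 : ℝ) : ℂ) := by
      rw [castL, main]
      push_cast [Complex.ofReal_tsum]
      ring
    exact_mod_cast this
  constructor
  · rw [key]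
    congr 1
    exact tsum_congr S_def
  · rw [key]
    -- reduce to 2‖a 0‖² ≤ ∑ ‖c n‖²
    have hineq : 2 * ‖a 0‖^2 ≤ ∑' n:ℤ, ‖c n‖^2 := by
      have hk : ∀ k : ℤ, (ρ:ℂ)^k * (ρ:ℂ)^(-k) = 1 := fun k => by
        rw [zpow_neg, mul_inv_cancel₀ (zpow_ne_zero _ hρC)]
      have hprod : ∀ n:ℕ, a ((n:ℤ)+1) * a (-((n:ℤ)+1)) = c ((n:ℤ)+1) * c (-((n:ℤ)+1)) := by
        intro n
        rw [hc_def]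
        simp only
        rw [show a ((n:ℤ)+1) * (ρ:ℂ)^((n:ℤ)+1) * (a (-((n:ℤ)+1)) * (ρ:ℂ)^(-((n:ℤ)+1)))
          = a ((n:ℤ)+1) * a (-((n:ℤ)+1)) * ((ρ:ℂ)^((n:ℤ)+1) * (ρ:ℂ)^(-((n:ℤ)+1))) by ring,
          hk, mul_one]
      have hinjp : Function.Injective (fun n:ℕ => ((n:ℤ)+1)) := by
        intro x y h; simp only at h; omega
      have hinjn : Function.Injective (fun n:ℕ => (-((n:ℤ)+1))) := by
        intro x y h; simp only at h; omega
      have hnegn : Summable (fun n:ℕ => ‖c (-((n:ℤ)+1))‖) := hcn.comp_injective hinjn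
      have hpos2 : Summable (fun n:ℕ => ‖c ((n:ℤ)+1)‖^2) := hs2.comp_injective hinjp
      have hneg2 : Summable (fun n:ℕ => ‖c (-((n:ℤ)+1))‖^2) := hs2.comp_injective hinjn
      have hprodsum : Summable (fun n:ℕ => ‖c ((n:ℤ)+1)‖ * ‖c (-((n:ℤ)+1))‖) := by
        refine Summable.of_nonneg_of_le (fun n => by positivity) (fun n => ?_)
          (hnegn.mul_left M)
        exact mul_le_mul_of_nonneg_right (hMle _) (norm_nonneg _)
      have hT : ‖a 0‖^2 ≤ 2 * ∑' n:ℕ, ‖c ((n:ℤ)+1)‖ * ‖c (-((n:ℤ)+1))‖ := by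
        have h0 : a 0 ^ 2 = -(2 * ∑' n : ℕ, a ((n:ℤ)+1) * a (-((n:ℤ)+1))) := by
          linear_combination hcoef
        have he : ‖a 0‖^2 = ‖a 0 ^ 2‖ := by rw [norm_pow]
        rw [he, h0, norm_neg, norm_mul, show ‖(2:ℂ)‖ = 2 by norm_num]
        refine mul_le_mul_of_nonneg_left ?_ (by norm_num)
        rw [tsum_congr hprod]
        refine (norm_tsum_le_tsum_norm ?_).trans
          (le_of_eq (tsum_congr fun n => norm_mul _ _))
        simpa [norm_mul] using hprodsum
      have hAM : ∑' n:ℕ, ‖c ((n:ℤ)+1)‖ * ‖c (-((n:ℤ)+1))‖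
          ≤ ∑' n:ℕ, (‖c ((n:ℤ)+1)‖^2 + ‖c (-((n:ℤ)+1))‖^2)/2 := by
        refine Summable.tsum_le_tsum (fun n => ?_) hprodsum ((hpos2.add hneg2).div_const 2)
        nlinarith [sq_nonneg (‖c ((n:ℤ)+1)‖ - ‖c (-((n:ℤ)+1))‖)]
      have hsplit : (∑' n:ℕ, (‖c ((n:ℤ)+1)‖^2 + ‖c (-((n:ℤ)+1))‖^2)/2)
          = (∑' n:ℕ, ‖c ((n:ℤ)+1)‖^2 + ∑' n:ℕ, ‖c (-((n:ℤ)+1))‖^2)/2 := by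
        rw [tsum_div_const, Summable.tsum_add hpos2 hneg2]
      have hnat : Summable (fun n:ℕ => ‖c (n:ℤ)‖^2) := hs2.comp_injective Nat.cast_injective
      have hdecomp : ∑' n:ℤ, ‖c n‖^2
          = ‖a 0‖^2 + (∑' n:ℕ, ‖c ((n:ℤ)+1)‖^2 + ∑' n:ℕ, ‖c (-((n:ℤ)+1))‖^2) := by
        rw [tsum_of_nat_of_neg_add_one (f := fun n:ℤ => ‖c n‖^2) hnat hneg2, Summable.tsum_eq_zero_add hnat]
        have h00 : ‖c ((0:ℕ):ℤ)‖^2 = ‖a 0‖^2 := by rw [hc_def]; norm_num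
        rw [h00]
        have : (fun n:ℕ => ‖c ((n+1:ℕ):ℤ)‖^2) = fun n:ℕ => ‖c ((n:ℤ)+1)‖^2 := by
          funext n; push_cast; ring_nf
        rw [this]
        ring
      rw [hdecomp]
      nlinarith [hT.trans (by linarith [hAM, hsplit.le] : 2 * ∑' n:ℕ,
        ‖c ((n:ℤ)+1)‖ * ‖c (-((n:ℤ)+1))‖ ≤ ∑' n:ℕ, ‖c ((n:ℤ)+1)‖^2 + ∑' n:ℕ, ‖c (-((n:ℤ)+1))‖^2)]
    nlinarith [Real.pi_pos, hineq]
end
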